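/- arXiv:2605.24303 — 3 statements merged into one kernel-verified Lean document; each statement's English description precedes it below -/
import Mathlib

section
/- Let V be a complex vector space with dim V ≥ 3. If σ : V × V → V is an alternating bilinear map such that σ(u,v) lies in the linear span of u and v for all u, v ∈ V, then there exists a linear functional λ ∈ V* with σ(u,v) = λ(u)v − λ(v)u for all u, v ∈ V. -/
namespace SpencerAux

variable {V : Type*} [AddCommGroup V] [Module ℂ V]

/-- pairwise linear independence predicate -/
def Pind (u v : V) : Prop := ∀ a b : ℂ, a • u + b • v = 0 → a = 0 ∧ b = 0

lemma Pind.symm {u v : V} (h : Pind u v) : Pind v u := fun a b hab => by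
  have := h b a (by rw [add_comm]; exact hab); exact ⟨this.2, this.1⟩

lemma Pind.left_ne {u v : V} (h : Pind u v) : u ≠ 0 := by
  intro hu
  exact one_ne_zero (h 1 0 (by simp [hu])).1

lemma Pind.right_ne {u v : V} (h : Pind u v) : v ≠ 0 := h.symm.left_ne

lemma solve_dep {u v : V} {a b : ℂ} (hb : b ≠ 0) (hab : a • u + b • v = 0) :
    v = (-(b⁻¹ * a)) • u := by
  have h1 : b • v = -(a • u) := by rw [eq_neg_iff_add_eq_zero, add_comm]; exact hab
  calc v = b⁻¹ • (b • v) := by rw [smul_smul, inv_mul_cancel₀ hb, one_smul]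
    _ = b⁻¹ • (-(a • u)) := by rw [h1]
    _ = (-(b⁻¹ * a)) • u := by rw [smul_neg, smul_smul, ← neg_smul]

lemma pind_of_not_mem {u v : V} (hu : u ≠ 0) (hv : v ∉ Submodule.span ℂ ({u} : Set V)) :
    Pind u v := by
  intro a b hab
  rcases eq_or_ne b 0 with hb | hb
  · subst hb
    simp only [zero_smul, add_zero] at hab
    exact ⟨(smul_eq_zero.mp hab).resolve_right hu, rfl⟩
  · exact absurd (Submodule.mem_span_singleton.mpr ⟨_, (solve_dep hb hab).symm⟩) hv

lemma Pind.not_mem_span {u v : V} (h : Pind u v) : v ∉ Submodule.span ℂ ({u} : Set V) := by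
  intro hv
  rw [Submodule.mem_span_singleton] at hv
  obtain ⟨c, hc⟩ := hv
  have := (h c (-1) (by rw [← hc]; module)).2
  norm_num at this

variable {σ : V →ₗ[ℂ] V →ₗ[ℂ] V}

lemma exists_not_mem_of_ne_top {p : Submodule ℂ V} (h : p ≠ ⊤) : ∃ v : V, v ∉ p := by
  by_contra hcon
  push_neg at hcon
  exact h (Submodule.eq_top_iff'.mpr hcon)

open Classical in
noncomputable def lam (σ : V →ₗ[ℂ] V →ₗ[ℂ] V)
    (hspan : ∀ u v : V, σ u v ∈ Submodule.span ℂ ({u, v} : Set V)) (u : V) : ℂ :=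
  if h : ∃ v : V, v ∉ Submodule.span ℂ ({u} : Set V) then
    (Submodule.mem_span_pair.mp (hspan u h.choose)).choose_spec.choose
  else 0

lemma coeff_eq (halt : ∀ v : V, σ v v = 0)
    (hspan : ∀ u v : V, σ u v ∈ Submodule.span ℂ ({u, v} : Set V))
    {u v w : V} (huv : Pind u v) (huw : Pind u w)
    {a b c d : ℂ} (h1 : σ u v = a • u + b • v) (h2 : σ u w = c • u + d • w) :
    b = d := by
  by_cases hw : w ∈ Submodule.span ℂ ({u, v} : Set V)
  · obtain ⟨α, β, hαβ⟩ := Submodule.mem_span_pair.mp hw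
    have hβ : β ≠ 0 := by
      intro hβ0
      subst hβ0
      simp only [zero_smul, add_zero] at hαβ
      have := (huw α (-1) (by rw [← hαβ]; module)).2
      norm_num at this
    have e1 : σ u w = (β * a) • u + (β * b) • v := by
      rw [← hαβ, map_add, map_smul, map_smul, halt u, smul_zero, zero_add, h1]
      module
    have e2 : (β * a) • u + (β * b) • v = c • u + d • (α • u + β • v) := by
      rw [← e1, h2, ← hαβ]
    have key : (β * a - (c + d * α)) • u + (β * b - d * β) • v = 0 := by
      have expand : (β * a - (c + d * α)) • u + (β * b - d * β) • v
          = ((β * a) • u + (β * b) • v) - (c • u + d • (α • u + β • v)) := by module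
      rw [expand, e2, sub_self]
    have hbd : β * b - d * β = 0 := (huv _ _ key).2
    have : β * b = β * d := by rw [sub_eq_zero] at hbd; rw [hbd]; ring
    exact mul_left_cancel₀ hβ this
  · obtain ⟨e, f, hef⟩ := Submodule.mem_span_pair.mp (hspan u (v + w))
    have hvw : σ u (v + w) = (a + c) • u + b • v + d • w := by
      rw [map_add, h1, h2]; module
    have key : (f - d) • w = (a + c - e) • u + (b - f) • v := by
      have expand : (f - d) • w - ((a + c - e) • u + (b - f) • v)
          = (e • u + f • (v + w)) - ((a + c) • u + b • v + d • w) := by module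
      rw [hef, hvw, sub_self] at expand
      exact sub_eq_zero.mp expand
    by_cases hfd : f = d
    · subst hfd
      simp only [sub_self, zero_smul] at key
      have := (huv _ _ key.symm).2
      rw [sub_eq_zero] at this
      exact this
    · exfalso
      apply hw
      rw [Submodule.mem_span_pair]
      have hfd' : f - d ≠ 0 := sub_ne_zero.mpr hfd
      refine ⟨(f - d)⁻¹ * (a + c - e), (f - d)⁻¹ * (b - f), ?_⟩
      calc ((f - d)⁻¹ * (a + c - e)) • u + ((f - d)⁻¹ * (b - f)) • v
          = (f - d)⁻¹ • ((a + c - e) • u + (b - f) • v) := by module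
        _ = (f - d)⁻¹ • ((f - d) • w) := by rw [key]
        _ = w := by rw [smul_smul, inv_mul_cancel₀ hfd', one_smul]

lemma lam_spec (halt : ∀ v : V, σ v v = 0)
    (hspan : ∀ u v : V, σ u v ∈ Submodule.span ℂ ({u, v} : Set V))
    {u v : V} {a b : ℂ} (huv : Pind u v) (h1 : σ u v = a • u + b • v) :
    lam σ hspan u = b := by
  have hex : ∃ x : V, x ∉ Submodule.span ℂ ({u} : Set V) := ⟨v, huv.not_mem_span⟩
  unfold lam
  rw [dif_pos hex]
  have hw : hex.choose ∉ Submodule.span ℂ ({u} : Set V) := hex.choose_spec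
  have huw : Pind u hex.choose := pind_of_not_mem huv.left_ne hw
  exact coeff_eq halt hspan huw huv
    ((Submodule.mem_span_pair.mp (hspan u hex.choose)).choose_spec.choose_spec).symm h1

lemma lam_zero (hspan : ∀ u v : V, σ u v ∈ Submodule.span ℂ ({u, v} : Set V)) :
    lam σ hspan (0 : V) = 0 := by
  unfold lam
  split
  · next h =>
    have hgoal : ∀ m n : ℂ, m • (0 : V) + n • h.choose = σ 0 h.choose → n = 0 := by
      intro m n hmn
      have hσ : σ (0 : V) h.choose = 0 := by simp
      rw [hσ, smul_zero, zero_add] at hmn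
      have hw : h.choose ≠ 0 := by
        intro h0
        apply h.choose_spec
        rw [h0]
        exact Submodule.zero_mem _
      exact (smul_eq_zero.mp hmn).resolve_right hw
    exact hgoal _ _ (Submodule.mem_span_pair.mp (hspan 0 h.choose)).choose_spec.choose_spec
  · rfl

lemma anti (halt : ∀ v : V, σ v v = 0) (u v : V) : σ v u = -(σ u v) := by
  have h0 := halt (u + v)
  simp only [map_add, LinearMap.add_apply, halt u, halt v, zero_add, add_zero] at h0
  rw [eq_neg_iff_add_eq_zero]
  exact h0

lemma formula_indep (halt : ∀ v : V, σ v v = 0)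
    (hspan : ∀ u v : V, σ u v ∈ Submodule.span ℂ ({u, v} : Set V))
    {u v : V} (huv : Pind u v) :
    σ u v = lam σ hspan u • v - lam σ hspan v • u := by
  obtain ⟨a, b, hab⟩ := Submodule.mem_span_pair.mp (hspan u v)
  have hb : lam σ hspan u = b := lam_spec halt hspan huv hab.symm
  have hanti : σ v u = (-b) • v + (-a) • u := by
    rw [anti halt u v, ← hab]; module
  have ha : lam σ hspan v = -a := lam_spec halt hspan huv.symm hanti
  rw [← hab, hb, ha]; module

section FinDim

variable [FiniteDimensional ℂ V]

lemma exists_pind (h3 : 3 ≤ Module.finrank ℂ V) {u : V} (hu : u ≠ 0) :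
    ∃ v : V, Pind u v := by
  have hne : Submodule.span ℂ ({u} : Set V) ≠ ⊤ := by
    intro htop
    have h1 : Module.finrank ℂ (Submodule.span ℂ ({u} : Set V)) = 1 :=
      finrank_span_singleton hu
    rw [htop, finrank_top] at h1
    omega
  obtain ⟨v, hv⟩ := exists_not_mem_of_ne_top hne
  exact ⟨v, pind_of_not_mem hu hv⟩

lemma exists_not_mem_pair (h3 : 3 ≤ Module.finrank ℂ V) (u u' : V) :
    ∃ v : V, v ∉ Submodule.span ℂ ({u, u'} : Set V) := by
  classical
  have h2 : Module.finrank ℂ (Submodule.span ℂ ({u, u'} : Set V)) ≤ 2 := by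
    have h := finrank_span_finset_le_card (R := ℂ) ({u, u'} : Finset V)
    have hc : ({u, u'} : Finset V).card ≤ 2 := (Finset.card_insert_le _ _).trans (by simp)
    have hs : ((({u, u'} : Finset V) : Set V)) = ({u, u'} : Set V) := by simp
    rw [hs] at h
    exact h.trans hc
  have hne : Submodule.span ℂ ({u, u'} : Set V) ≠ ⊤ := by
    intro htop
    rw [htop, finrank_top] at h2
    omega
  exact exists_not_mem_of_ne_top hne

lemma lam_smul (halt : ∀ v : V, σ v v = 0)
    (hspan : ∀ u v : V, σ u v ∈ Submodule.span ℂ ({u, v} : Set V))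
    (h3 : 3 ≤ Module.finrank ℂ V) (c : ℂ) (u : V) :
    lam σ hspan (c • u) = c * lam σ hspan u := by
  rcases eq_or_ne u 0 with rfl | hu
  · rw [smul_zero, lam_zero hspan, mul_zero]
  rcases eq_or_ne c 0 with rfl | hc
  · rw [zero_smul, lam_zero hspan, zero_mul]
  · obtain ⟨v, huv⟩ := exists_pind h3 hu
    have hf := formula_indep halt hspan huv
    have hcu : Pind (c • u) v := by
      intro a b hab
      have h' : (a * c) • u + b • v = 0 := by rw [← hab]; module
      obtain ⟨hac, hb⟩ := huv _ _ h'
      exact ⟨(mul_eq_zero.mp hac).resolve_right hc, hb⟩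
    have h2 : σ (c • u) v = (-(lam σ hspan v)) • (c • u) + (c * lam σ hspan u) • v := by
      rw [map_smul, LinearMap.smul_apply, hf]
      module
    exact lam_spec halt hspan hcu h2

lemma lam_add (halt : ∀ v : V, σ v v = 0)
    (hspan : ∀ u v : V, σ u v ∈ Submodule.span ℂ ({u, v} : Set V))
    (h3 : 3 ≤ Module.finrank ℂ V) (u u' : V) :
    lam σ hspan (u + u') = lam σ hspan u + lam σ hspan u' := by
  rcases eq_or_ne u 0 with rfl | hu
  · rw [zero_add, lam_zero hspan, zero_add]
  by_cases hdep : ∃ k : ℂ, u' = k • u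
  · obtain ⟨k, rfl⟩ := hdep
    have h1 : u + k • u = (1 + k) • u := by module
    rw [h1, lam_smul halt hspan h3, lam_smul halt hspan h3]
    ring
  · have hu' : u' ≠ 0 := fun h => hdep ⟨0, by simp [h]⟩
    have huu'_ne : u + u' ≠ 0 := by
      intro h
      refine hdep ⟨-1, ?_⟩
      rw [neg_smul, one_smul]
      exact eq_neg_iff_add_eq_zero.mpr (by rw [add_comm]; exact h)
    obtain ⟨v, hv⟩ := exists_not_mem_pair h3 u u'
    have hmono1 : Submodule.span ℂ ({u} : Set V) ≤ Submodule.span ℂ ({u, u'} : Set V) :=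
      Submodule.span_mono (by simp)
    have hmono2 : Submodule.span ℂ ({u'} : Set V) ≤ Submodule.span ℂ ({u, u'} : Set V) :=
      Submodule.span_mono (by simp)
    have hmono3 : Submodule.span ℂ ({u + u'} : Set V) ≤ Submodule.span ℂ ({u, u'} : Set V) := by
      rw [Submodule.span_le]
      intro x hx
      simp only [Set.mem_singleton_iff] at hx
      subst hx
      exact Submodule.add_mem _ (Submodule.subset_span (by simp))
        (Submodule.subset_span (by simp))
    have hvu : Pind u v := pind_of_not_mem hu (fun hm => hv (hmono1 hm))
    have hvu' : Pind u' v := pind_of_not_mem hu' (fun hm => hv (hmono2 hm))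
    have hsum : Pind (u + u') v := pind_of_not_mem huu'_ne (fun hm => hv (hmono3 hm))
    have e1 := formula_indep halt hspan hvu
    have e2 := formula_indep halt hspan hvu'
    have e3 := formula_indep halt hspan hsum
    have e4 : σ (u + u') v = σ u v + σ u' v := by rw [map_add, LinearMap.add_apply]
    set L := lam σ hspan with hL
    have key : (L u + L u' - L (u + u')) • v = 0 := by
      have expand : (L u + L u' - L (u + u')) • v
          = (L u • v - L v • u + (L u' • v - L v • u')) - (L (u + u') • v - L v • (u + u')) := by
        module
      rw [expand, ← e1, ← e2, ← e3, ← e4, sub_self]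
    have h0 := (smul_eq_zero.mp key).resolve_right hvu.right_ne
    have := sub_eq_zero.mp h0
    exact this.symm

end FinDim

end SpencerAux

open SpencerAux in
/-- Let `V` be a complex vector space with `dim V ≥ 3`. If `σ : V × V → V` is an
alternating bilinear map such that `σ(u,v)` lies in the linear span of `u` and `v` for all
`u, v ∈ V`, then there exists a linear functional `λ ∈ V*` with
`σ(u,v) = λ(u)v − λ(v)u` for all `u, v ∈ V`. -/
theorem alternating_span_valued_is_spencer (V : Type*) [AddCommGroup V] [Module ℂ V]
    [FiniteDimensional ℂ V] (h3 : 3 ≤ Module.finrank ℂ V)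
    (σ : V →ₗ[ℂ] V →ₗ[ℂ] V)
    (halt : ∀ v : V, σ v v = 0)
    (hspan : ∀ u v : V, σ u v ∈ Submodule.span ℂ ({u, v} : Set V)) :
    ∃ l : V →ₗ[ℂ] ℂ, ∀ u v : V, σ u v = l u • v - l v • u := by
  refine ⟨{ toFun := lam σ hspan,
            map_add' := lam_add halt hspan h3,
            map_smul' := fun c u => by
              simpa using lam_smul halt hspan h3 c u }, ?_⟩
  intro u v
  show σ u v = lam σ hspan u • v - lam σ hspan v • u
  by_cases h : Pind u v
  · exact formula_indep halt hspan h
  · simp only [Pind, not_forall] at h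
    obtain ⟨a, b, hab, hne⟩ := h
    rcases eq_or_ne b 0 with rfl | hb
    · simp only [zero_smul, add_zero] at hab
      have ha : a ≠ 0 := fun h0 => hne ⟨h0, rfl⟩
      have hu : u = 0 := (smul_eq_zero.mp hab).resolve_left ha
      subst hu
      simp [lam_zero hspan]
    · have hveq : v = (-(b⁻¹ * a)) • u := solve_dep hb hab
      rw [hveq, map_smul, halt u, smul_zero, lam_smul halt hspan h3]
      module
end

section
/- For a complex vector space V with dim V = n ≥ 3, the space {σ ∈ Hom(Λ²V, V) | σ(u,v) ∈ Cu + Cv for all u,v ∈ V} has dimension exactly n (it is isomorphic to V* via λ ↦ ((u,v) ↦ λ(u)v − λ(v)u)). -/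
open Submodule Module

private lemma exists_notMem_pair' {V : Type*} [AddCommGroup V] [Module ℂ V]
    [FiniteDimensional ℂ V] (h3 : 3 ≤ Module.finrank ℂ V) (u v : V) :
    ∃ w, w ∉ span ℂ ({u, v} : Set V) := by
  classical
  have hlt : span ℂ ({u, v} : Set V) < ⊤ := by
    apply span_lt_top_of_card_lt_finrank
    have : ({u, v} : Set V).toFinset.card ≤ 2 := by
      rw [Set.toFinset_insert, Set.toFinset_singleton]
      exact (Finset.card_insert_le _ _).trans (by simp)
    omega
  obtain ⟨w, -, hw⟩ := SetLike.exists_of_lt hlt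
  exact ⟨w, hw⟩

private lemma pair_zero' {V : Type*} [AddCommGroup V] [Module ℂ V]
    {x y : V} (hx : x ≠ 0) (hy : y ∉ span ℂ ({x} : Set V))
    {s t : ℂ} (h : s • x + t • y = 0) : s = 0 ∧ t = 0 := by
  have ht : t = 0 := by
    by_contra ht
    apply hy
    rw [mem_span_singleton]
    refine ⟨-(t⁻¹ * s), ?_⟩
    have h2 : t • y = -(s • x) := by linear_combination (norm := module) h
    calc (-(t⁻¹ * s)) • x = t⁻¹ • (-(s • x)) := by module
    _ = t⁻¹ • (t • y) := by rw [h2]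
    _ = y := inv_smul_smul₀ ht y
  refine ⟨?_, ht⟩
  rw [ht, zero_smul, add_zero] at h
  exact (smul_eq_zero.mp h).resolve_right hx

private lemma triple_zero' {V : Type*} [AddCommGroup V] [Module ℂ V]
    {x y z : V} (hx : x ≠ 0) (hy : y ∉ span ℂ ({x} : Set V))
    (hz : z ∉ span ℂ ({x, y} : Set V))
    {c0 c1 c2 : ℂ} (h : c0 • x + c1 • y + c2 • z = 0) : c0 = 0 ∧ c1 = 0 ∧ c2 = 0 := by
  have hc2 : c2 = 0 := by
    by_contra hc2
    apply hz
    rw [mem_span_pair]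
    refine ⟨-(c2⁻¹ * c0), -(c2⁻¹ * c1), ?_⟩
    have h2 : c2 • z = -(c0 • x) - c1 • y := by linear_combination (norm := module) h
    calc (-(c2⁻¹ * c0)) • x + (-(c2⁻¹ * c1)) • y = c2⁻¹ • (-(c0 • x) - c1 • y) := by module
    _ = c2⁻¹ • (c2 • z) := by rw [h2]
    _ = z := inv_smul_smul₀ hc2 z
  rw [hc2, zero_smul, add_zero] at h
  obtain ⟨a, b⟩ := pair_zero' hx hy h
  exact ⟨a, b, hc2⟩

private lemma key' {V : Type*} [AddCommGroup V] [Module ℂ V] [FiniteDimensional ℂ V]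
    (h3 : 3 ≤ Module.finrank ℂ V) (σ : V →ₗ[ℂ] V →ₗ[ℂ] V)
    (halt : ∀ v, σ v v = 0)
    (hspan : ∀ u v, σ u v ∈ span ℂ ({u, v} : Set V)) :
    ∃ l : V →ₗ[ℂ] ℂ, ∀ u v, σ u v = l u • v - l v • u := by
  classical
  have hskew : ∀ u v : V, σ v u = -σ u v := by
    intro u v
    have h0 := halt (u + v)
    simp only [map_add, LinearMap.add_apply, halt, zero_add, add_zero] at h0
    exact eq_neg_of_add_eq_zero_left h0
  choose a b hab using fun u v => mem_span_pair.mp (hspan u v)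
  have hsingle : ∀ v : V, ∃ w, w ∉ span ℂ ({v} : Set V) := by
    intro v
    obtain ⟨w, hw⟩ := exists_notMem_pair' h3 v v
    exact ⟨w, by simpa [Set.pair_eq_singleton] using hw⟩
  choose wit hwit using hsingle
  set ℓ : V → ℂ := fun v => b v (wit v) with hℓ
  have hwitne : ∀ v, wit v ≠ 0 := fun v h => hwit v (h ▸ zero_mem _)
  -- constancy, triple-independent case
  have const3 : ∀ v u u' : V, v ≠ 0 → u ∉ span ℂ ({v} : Set V) →
      u' ∉ span ℂ ({v, u} : Set V) → b v u = b v u' := by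
    intro v u u' hv hu hu'
    obtain ⟨s, t, hst⟩ := mem_span_pair.mp (hspan v (u + u'))
    have hσ : σ v (u + u') = σ v u + σ v u' := map_add _ _ _
    have heq : (s - a v u - a v u') • v + (t - b v u) • u + (t - b v u') • u' = 0 := by
      have hid : (s - a v u - a v u') • v + (t - b v u) • u + (t - b v u') • u'
          = (s • v + t • (u + u')) - (a v u • v + b v u • u) - (a v u' • v + b v u' • u') := by
        module
      rw [hid, hst, hab, hab, hσ]
      abel
    obtain ⟨-, h1, h2⟩ := triple_zero' hv hu hu' heq
    have e1 : t = b v u := by linear_combination h1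
    have e2 : t = b v u' := by linear_combination h2
    rw [← e1, ← e2]
  -- constancy, general case
  have const : ∀ v u u' : V, v ≠ 0 → u ∉ span ℂ ({v} : Set V) →
      u' ∉ span ℂ ({v} : Set V) → b v u = b v u' := by
    intro v u u' hv hu hu'
    by_cases hc : u' ∈ span ℂ ({v, u} : Set V)
    · obtain ⟨w, hw⟩ := exists_notMem_pair' h3 v u
      have hle : span ℂ ({v, u'} : Set V) ≤ span ℂ ({v, u} : Set V) := by
        rw [span_le]
        rintro x (rfl | rfl)
        · exact subset_span (Set.mem_insert _ _)
        · exact hc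
      have hw' : w ∉ span ℂ ({v, u'} : Set V) := fun hm => hw (hle hm)
      rw [const3 v u w hv hu hw, const3 v u' w hv hu' hw']
    · exact const3 v u u' hv hu hc
  -- ℓ 0 = 0
  have hl0 : ℓ 0 = 0 := by
    have h := hab 0 (wit 0)
    simp only [map_zero, LinearMap.zero_apply, smul_zero, zero_add] at h
    exact (smul_eq_zero.mp h).resolve_right (hwitne 0)
  -- pointwise formula on independent pairs
  have hrep : ∀ v u : V, v ≠ 0 → u ∉ span ℂ ({v} : Set V) →
      σ v u = ℓ v • u - ℓ u • v := by
    intro v u hv hu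
    have hune : u ≠ 0 := fun h => hu (h ▸ zero_mem _)
    have hvu : v ∉ span ℂ ({u} : Set V) := by
      intro hm
      obtain ⟨c, hc⟩ := mem_span_singleton.mp hm
      have hcne : c ≠ 0 := by
        rintro rfl; exact hv (by rw [← hc, zero_smul])
      exact hu (mem_span_singleton.mpr ⟨c⁻¹, by rw [← hc, inv_smul_smul₀ hcne]⟩)
    have h1 : b v u = ℓ v := const v u (wit v) hv hu (hwit v)
    have h2 : b u v = ℓ u := const u v (wit u) hune hvu (hwit u)
    have heq : (a v u + b u v) • v + (b v u + a u v) • u = 0 := by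
      have hid : (a v u + b u v) • v + (b v u + a u v) • u
          = (a v u • v + b v u • u) + (a u v • u + b u v • v) := by module
      rw [hid, hab, hab, hskew u v]
      abel
    obtain ⟨hA, hB⟩ := pair_zero' hv hu heq
    have hA' : a v u = -ℓ u := by linear_combination hA - h2
    have : σ v u = (-ℓ u) • v + (b v u) • u := by rw [← hA']; exact (hab v u).symm
    rw [this, h1]; module
  -- homogeneity
  have hsmul : ∀ (c : ℂ) (v : V), ℓ (c • v) = c * ℓ v := by
    intro c v
    rcases eq_or_ne c 0 with rfl | hc
    · simp [hl0]
    rcases eq_or_ne v 0 with rfl | hv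
    · simp [hl0]
    have hcv : c • v ≠ 0 := smul_ne_zero hc hv
    have hu : wit v ∉ span ℂ ({c • v} : Set V) := by
      rw [show span ℂ ({c • v} : Set V) = span ℂ ({v} : Set V) from
        span_singleton_smul_eq (IsUnit.mk0 c hc) v]
      exact hwit v
    have e1 := hrep (c • v) (wit v) hcv hu
    have e2 : σ (c • v) (wit v) = c • σ v (wit v) := by
      rw [map_smul, LinearMap.smul_apply]
    have e3 := hrep v (wit v) hv (hwit v)
    have h0 : (ℓ (c • v) - c * ℓ v) • (wit v) = 0 := by
      have hid : (ℓ (c • v) - c * ℓ v) • (wit v)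
          = (ℓ (c • v) • (wit v) - ℓ (wit v) • (c • v))
            - c • (ℓ v • (wit v) - ℓ (wit v) • v) := by module
      rw [hid, ← e1, ← e3, e2, sub_self]
    have h5 := (smul_eq_zero.mp h0).resolve_right (hwitne v)
    linear_combination h5
  -- additivity
  have hadd : ∀ v v' : V, ℓ (v + v') = ℓ v + ℓ v' := by
    intro v v'
    rcases eq_or_ne v 0 with rfl | hv
    · simp [hl0]
    rcases eq_or_ne v' 0 with rfl | hv'
    · simp [hl0]
    rcases eq_or_ne (v + v') 0 with hvv | hvv
    · have hv' : v' = -v := eq_neg_of_add_eq_zero_right hvv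
      rw [hvv, hl0, hv', show -v = (-1 : ℂ) • v by module, hsmul]
      ring
    obtain ⟨u, hu⟩ := exists_notMem_pair' h3 v v'
    have hu1 : u ∉ span ℂ ({v} : Set V) := fun hm =>
      hu (span_mono (by simp) hm)
    have hu2 : u ∉ span ℂ ({v'} : Set V) := fun hm =>
      hu (span_mono (by simp [Set.singleton_subset_iff]) hm)
    have hu3 : u ∉ span ℂ ({v + v'} : Set V) := fun hm => by
      apply hu
      have : span ℂ ({v + v'} : Set V) ≤ span ℂ ({v, v'} : Set V) := by
        rw [span_le, Set.singleton_subset_iff]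
        exact add_mem (subset_span (by simp)) (subset_span (by simp))
      exact this hm
    have hune : u ≠ 0 := fun h => hu (h ▸ zero_mem _)
    have e1 := hrep (v + v') u hvv hu3
    have e2 := hrep v u hv hu1
    have e3 := hrep v' u hv' hu2
    have e4 : σ (v + v') u = σ v u + σ v' u := by rw [map_add, LinearMap.add_apply]
    have h0 : (ℓ (v + v') - ℓ v - ℓ v') • u = 0 := by
      have hid : (ℓ (v + v') - ℓ v - ℓ v') • u
          = (ℓ (v + v') • u - ℓ u • (v + v'))
            - (ℓ v • u - ℓ u • v) - (ℓ v' • u - ℓ u • v') := by module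
      rw [hid, ← e1, ← e2, ← e3, e4]
      abel
    have h5 := (smul_eq_zero.mp h0).resolve_right hune
    linear_combination h5
  have hms : ∀ (c : ℂ) (x : V), ℓ (c • x) = (RingHom.id ℂ) c • ℓ x := fun c x => by
    simpa using hsmul c x
  refine ⟨⟨⟨ℓ, fun x y => hadd x y⟩, hms⟩, ?_⟩
  intro u v
  show σ u v = ℓ u • v - ℓ v • u
  rcases eq_or_ne u 0 with rfl | hu0
  · simp [hl0]
  by_cases hv : v ∈ span ℂ ({u} : Set V)
  · obtain ⟨c, hc⟩ := mem_span_singleton.mp hv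
    have hσ : σ u v = 0 := by
      rw [← hc, map_smul, halt, smul_zero]
    rw [hσ, ← hc, show ℓ (c • u) = c * ℓ u from hsmul c u]
    module
  · exact hrep u v hu0 hv


private def Phi' {V : Type*} [AddCommGroup V] [Module ℂ V] :
    (V →ₗ[ℂ] ℂ) →ₗ[ℂ] (V →ₗ[ℂ] V →ₗ[ℂ] V) where
  toFun l := LinearMap.mk₂ ℂ (fun u v => l u • v - l v • u)
    (fun m₁ m₂ n => by simp only [map_add]; module)
    (fun c m n => by simp only [map_smul, smul_eq_mul]; module)
    (fun m n₁ n₂ => by simp only [map_add]; module)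
    (fun c m n => by simp only [map_smul, smul_eq_mul]; module)
  map_add' l₁ l₂ := by
    ext u v
    simp only [LinearMap.mk₂_apply, LinearMap.add_apply]
    module
  map_smul' c l := by
    ext u v
    simp only [LinearMap.mk₂_apply, LinearMap.smul_apply, RingHom.id_apply, smul_eq_mul]
    module

private lemma Phi'_apply {V : Type*} [AddCommGroup V] [Module ℂ V]
    (l : V →ₗ[ℂ] ℂ) (u v : V) : Phi' l u v = l u • v - l v • u := rfl



/-- For a complex vector space `V` with `dim V = n ≥ 3`, the space
`{σ ∈ Hom(Λ²V, V) | σ(u,v) ∈ ℂu + ℂv for all u,v ∈ V}` has dimension exactly `n`;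
it is isomorphic to `V*` via `λ ↦ ((u,v) ↦ λ(u)v − λ(v)u)`.
Here `Hom(Λ²V, V)` is realized as the alternating bilinear maps `V × V → V`. -/
theorem dim_span_valued_alternating (V : Type*) [AddCommGroup V] [Module ℂ V]
    [FiniteDimensional ℂ V] (n : ℕ) (hn : Module.finrank ℂ V = n) (h3 : 3 ≤ n) :
    ∃ S : Submodule ℂ (V →ₗ[ℂ] V →ₗ[ℂ] V),
      (∀ σ : V →ₗ[ℂ] V →ₗ[ℂ] V,
        σ ∈ S ↔ ((∀ v : V, σ v v = 0) ∧
          ∀ u v : V, σ u v ∈ Submodule.span ℂ ({u, v} : Set V))) ∧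
      Module.finrank ℂ S = n ∧
      ∃ e : (V →ₗ[ℂ] ℂ) ≃ₗ[ℂ] S,
        ∀ (l : V →ₗ[ℂ] ℂ) (u v : V), ((e l : V →ₗ[ℂ] V →ₗ[ℂ] V) u) v = l u • v - l v • u := by
  classical
  have h3' : 3 ≤ Module.finrank ℂ V := hn ▸ h3
  have hinj : Function.Injective (Phi' (V := V)) := by
    rw [injective_iff_map_eq_zero]
    intro l hl
    ext u
    show l u = 0
    rcases eq_or_ne u 0 with rfl | hu0
    · simp
    obtain ⟨v, hv⟩ := exists_notMem_pair' h3' u u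
    have hv : v ∉ span ℂ ({u} : Set V) := by
      simpa [Set.pair_eq_singleton] using hv
    have h0 : l u • v - l v • u = 0 := by
      calc l u • v - l v • u = Phi' l u v := rfl
      _ = 0 := by rw [hl]; rfl
    have h1 : (-(l v)) • u + (l u) • v = 0 := by
      rw [← h0]; module
    exact (pair_zero' hu0 hv h1).2
  refine ⟨LinearMap.range Phi', ?_, ?_, ?_⟩
  · intro σ
    constructor
    · rintro ⟨l, rfl⟩
      constructor
      · intro v
        show l v • v - l v • v = 0
        exact sub_self _
      · intro u v
        show l u • v - l v • u ∈ _
        exact sub_mem (smul_mem _ _ (subset_span (by simp)))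
          (smul_mem _ _ (subset_span (by simp)))
    · rintro ⟨halt, hspan⟩
      obtain ⟨l, hl⟩ := key' h3' σ halt hspan
      exact ⟨l, by ext u v; exact (hl u v).symm⟩
  · calc Module.finrank ℂ (LinearMap.range (Phi' (V := V)))
        = Module.finrank ℂ (V →ₗ[ℂ] ℂ) :=
          (LinearEquiv.finrank_eq (LinearEquiv.ofInjective _ hinj)).symm
    _ = Module.finrank ℂ V := Subspace.dual_finrank_eq
    _ = n := hn
  · refine ⟨LinearEquiv.ofInjective _ hinj, fun l u v => ?_⟩
    have h : ((LinearEquiv.ofInjective _ hinj) l : V →ₗ[ℂ] V →ₗ[ℂ] V) = Phi' l :=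
      LinearEquiv.ofInjective_apply _ l
    rw [h]
    rfl
end

section
/- Let V be a complex vector space and q a nondegenerate quadratic form on V with dim V ≥ 3. If g ∈ GL(V) maps the zero cone {v ∈ V | q(v) = 0} onto itself, then there exists a nonzero constant c ∈ C with q(g(v)) = c·q(v) for all v ∈ V. (Thus the linear automorphism group of the affine cone over a smooth quadric hypersurface is the conformal orthogonal group C* · O(q).) -/
open QuadraticMap

private lemma expand3 {V : Type*} [AddCommGroup V] [Module ℂ V]
    (q : QuadraticForm ℂ V) (v u w : V) (s t : ℂ) :
    q (v + s • u + t • w) = q v + s^2 * q u + t^2 * q w + s * t * polar (⇑q) u w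
      + s * polar (⇑q) v u + t * polar (⇑q) v w := by
  rw [QuadraticMap.map_add ⇑q (v + s•u) (t•w), QuadraticMap.map_add ⇑q v (s•u)]
  simp only [polar_add_left, polar_smul_left, polar_smul_right, QuadraticMap.map_smul,
    smul_eq_mul]
  ring

private lemma quad3 (A B C s1 s2 s3 : ℂ) (h12 : s1 ≠ s2) (h13 : s1 ≠ s3) (h23 : s2 ≠ s3)
    (e1 : A*s1^2 + B*s1 + C = 0) (e2 : A*s2^2 + B*s2 + C = 0)
    (e3 : A*s3^2 + B*s3 + C = 0) : A = 0 ∧ B = 0 ∧ C = 0 := by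
  have d12 : A*(s1+s2) + B = 0 := by
    apply mul_left_cancel₀ (sub_ne_zero.mpr h12)
    linear_combination e1 - e2
  have d13 : A*(s1+s3) + B = 0 := by
    apply mul_left_cancel₀ (sub_ne_zero.mpr h13)
    linear_combination e1 - e3
  have hA : A = 0 := by
    apply mul_left_cancel₀ (sub_ne_zero.mpr h23)
    linear_combination d12 - d13
  have hB : B = 0 := by linear_combination d12 - (s1+s2) * hA
  exact ⟨hA, hB, by linear_combination e1 - s1^2 * hA - s1 * hB⟩

/-- Let `V` be a complex vector space with `dim V ≥ 3` and `q` a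
nondegenerate quadratic form on `V` (nondegeneracy: the polar bilinear form has trivial
kernel). If `g ∈ GL(V)` maps the zero cone `{v | q(v) = 0}` onto itself, then there is a
nonzero constant `c ∈ ℂ` with `q(g(v)) = c·q(v)` for all `v`. Thus the linear automorphism
group of the affine cone over a smooth quadric is the conformal orthogonal group. -/
theorem quadric_cone_automorphism_conformal (V : Type*) [AddCommGroup V] [Module ℂ V]
    [FiniteDimensional ℂ V] (h3 : 3 ≤ Module.finrank ℂ V)
    (q : QuadraticForm ℂ V)
    (hnd : ∀ v : V, (∀ w : V, QuadraticMap.polar (⇑q) v w = 0) → v = 0)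
    (g : V ≃ₗ[ℂ] V)
    (hg : (⇑g) '' {v : V | q v = 0} = {v : V | q v = 0}) :
    ∃ c : ℂ, c ≠ 0 ∧ ∀ v : V, q (g v) = c * q v := by
  -- q vanishes on images of isotropic vectors
  have hvan : ∀ x : V, q x = 0 → q (g x) = 0 := by
    intro x hx
    have : g x ∈ (⇑g) '' {v : V | q v = 0} := ⟨x, hx, rfl⟩
    rw [hg] at this; exact this
  -- q is not identically zero
  have hne : ∃ v : V, q v ≠ 0 := by
    by_contra h
    push_neg at h
    have h0 : ∀ v, v = (0:V) := fun v =>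
      hnd v (fun w => by simp [QuadraticMap.polar, h])
    have : Subsingleton V := ⟨fun a b => by rw [h0 a, h0 b]⟩
    have : Module.finrank ℂ V = 0 := Module.finrank_zero_of_subsingleton
    omega
  obtain ⟨v₀, hv₀⟩ := hne
  have hv₀0 : v₀ ≠ 0 := fun h => hv₀ (by simp [h])
  -- find a nonzero isotropic vector u
  obtain ⟨u, hu0, hu⟩ : ∃ u : V, u ≠ 0 ∧ q u = 0 := by
    obtain ⟨w, hw⟩ : ∃ w : V, w ∉ Submodule.span ℂ {v₀} := by
      by_contra h
      push_neg at h
      have htop : Submodule.span ℂ {v₀} = ⊤ := by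
        rw [Submodule.eq_top_iff']; exact h
      have h1 : Module.finrank ℂ (Submodule.span ℂ ({v₀} : Set V)) = 1 :=
        finrank_span_singleton hv₀0
      rw [htop, finrank_top] at h1
      omega
    obtain ⟨s, hs⟩ : ∃ s : ℂ, s^2 = (polar (⇑q) w v₀)^2 - 4 * q v₀ * q w :=
      IsAlgClosed.exists_pow_nat_eq _ zero_lt_two
    set t : ℂ := (-(polar (⇑q) w v₀) + s) / (2 * q v₀) with ht
    refine ⟨w + t • v₀, ?_, ?_⟩
    · intro h
      apply hw
      have : w = -t • v₀ := by
        rw [neg_smul]; exact eq_neg_of_add_eq_zero_left h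
      rw [this]
      exact Submodule.smul_mem _ _ (Submodule.mem_span_singleton_self v₀)
    · have hexp : q (w + t • v₀) = q w + t^2 * q v₀ + t * polar (⇑q) w v₀ := by
        rw [QuadraticMap.map_add ⇑q w (t • v₀), polar_smul_right, QuadraticMap.map_smul]
        simp only [smul_eq_mul]; ring
      rw [hexp]
      have h2a : (2 * q v₀) * t = -(polar (⇑q) w v₀) + s := by
        rw [ht]; field_simp
      apply mul_left_cancel₀ (pow_ne_zero 2 (mul_ne_zero two_ne_zero hv₀))
      linear_combination (q v₀) * hs
        + (q v₀ * (2 * q v₀ * t + polar (⇑q) w v₀ + s)) * h2a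
  -- complete to a pair u, w with q w = 0 and polar q u w ≠ 0
  obtain ⟨z, hz⟩ : ∃ z : V, polar (⇑q) u z ≠ 0 := by
    by_contra h
    push_neg at h
    exact hu0 (hnd u h)
  have huu : polar (⇑q) u u = 0 := by
    have h2 : q (u + u) = 0 := by
      rw [show u + u = (2:ℂ) • u by module, QuadraticMap.map_smul, hu]; simp
    simp [QuadraticMap.polar, h2, hu]
  obtain ⟨w, hw, hbw⟩ : ∃ w : V, q w = 0 ∧ polar (⇑q) u w ≠ 0 := by
    refine ⟨z + (-(q z)/polar (⇑q) u z) • u, ?_, ?_⟩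
    · rw [QuadraticMap.map_add ⇑q z _, QuadraticMap.map_smul, hu,
        polar_smul_right, polar_comm ⇑q z u]
      simp only [smul_eq_mul]
      field_simp
      ring
    · rw [polar_add_right, polar_smul_right, huu]
      simpa using hz
  -- the key polynomial identity
  have key : ∀ (u w : V), q u = 0 → q w = 0 → polar (⇑q) u w ≠ 0 →
      ∀ (v : V) (s : ℂ), polar (⇑q) v w + s * polar (⇑q) u w ≠ 0 →
      (q (g v) + s * polar (⇑q) (g v) (g u)) * (polar (⇑q) v w + s * polar (⇑q) u w)
        - (q v + s * polar (⇑q) v u) *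
          (polar (⇑q) (g v) (g w) + s * polar (⇑q) (g u) (g w)) = 0 := by
    intro u w hu hw hb v s hD
    set t : ℂ := -(q v + s * polar (⇑q) v u) / (polar (⇑q) v w + s * polar (⇑q) u w)
      with htdef
    have ht : t * (polar (⇑q) v w + s * polar (⇑q) u w)
        = -(q v + s * polar (⇑q) v u) := by
      rw [htdef]; field_simp
    have h0 : q (v + s • u + t • w) = 0 := by
      rw [expand3, hu, hw]
      linear_combination ht
    have h1 : q (g (v + s • u + t • w)) = 0 := hvan _ h0
    have hgim : g (v + s • u + t • w) = g v + s • g u + t • g w := by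
      simp [map_add, _root_.map_smul]
    rw [hgim, expand3, hvan u hu, hvan w hw] at h1
    linear_combination (polar (⇑q) v w + s * polar (⇑q) u w) * h1
      - (polar (⇑q) (g v) (g w) + s * polar (⇑q) (g u) (g w)) * ht
  -- extract coefficients for every v
  have main : ∀ v : V, q (g v) * polar (⇑q) u w = q v * polar (⇑q) (g u) (g w) := by
    intro v
    set b := polar (⇑q) u w with hbdef
    set Bvw := polar (⇑q) v w with hBvw
    set Bvu := polar (⇑q) v u with hBvu
    set B'vu := polar (⇑q) (g v) (g u) with hB'vu
    set B'vw := polar (⇑q) (g v) (g w) with hB'vw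
    set B'uw := polar (⇑q) (g u) (g w) with hB'uw
    have hsval : ∀ k : ℂ, k ≠ 0 → Bvw + ((k - Bvw)/b) * b ≠ 0 := by
      intro k hk
      field_simp
      simpa using hk
    have hev : ∀ k : ℂ, k ≠ 0 →
        (B'vu * b - Bvu * B'uw) * ((k - Bvw)/b)^2
          + (q (g v) * b + B'vu * Bvw - q v * B'uw - Bvu * B'vw) * ((k - Bvw)/b)
          + (q (g v) * Bvw - q v * B'vw) = 0 := by
      intro k hk
      have := key u w hu hw hbw v ((k - Bvw)/b) (hsval k hk)
      linear_combination this
    have hdist : ∀ k l : ℂ, k ≠ l → (k - Bvw)/b ≠ (l - Bvw)/b := by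
      intro k l hkl h
      apply hkl
      have h3 := congrArg (· * b) h
      simp only [div_mul_cancel₀ _ hbw] at h3
      linear_combination h3
    obtain ⟨hA, hB, -⟩ := quad3 _ _ _ _ _ _ (hdist 1 2 (by norm_num))
      (hdist 1 3 (by norm_num)) (hdist 2 3 (by norm_num))
      (hev 1 one_ne_zero) (hev 2 two_ne_zero) (hev 3 three_ne_zero)
    -- swapped version: only the leading coefficient is needed
    have hb' : polar (⇑q) w u ≠ 0 := by rwa [polar_comm]
    have hsval' : ∀ k : ℂ, k ≠ 0 → polar (⇑q) v u + ((k - Bvu)/polar (⇑q) w u)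
        * polar (⇑q) w u ≠ 0 := by
      intro k hk
      field_simp [← hBvu]
      simpa [← hBvu] using hk
    have hev' : ∀ k : ℂ, k ≠ 0 →
        (B'vw * polar (⇑q) w u - Bvw * polar (⇑q) (g w) (g u)) * ((k - Bvu)/polar (⇑q) w u)^2
          + (q (g v) * polar (⇑q) w u + B'vw * Bvu - q v * polar (⇑q) (g w) (g u)
              - Bvw * B'vu) * ((k - Bvu)/polar (⇑q) w u)
          + (q (g v) * Bvu - q v * B'vu) = 0 := by
      intro k hk
      have := key w u hw hu hb' v ((k - Bvu)/polar (⇑q) w u) (hsval' k hk)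
      linear_combination this
    have hdist' : ∀ k l : ℂ, k ≠ l →
        (k - Bvu)/polar (⇑q) w u ≠ (l - Bvu)/polar (⇑q) w u := by
      intro k l hkl h
      apply hkl
      have h3 := congrArg (· * polar (⇑q) w u) h
      simp only [div_mul_cancel₀ _ hb'] at h3
      linear_combination h3
    obtain ⟨hA', -, -⟩ := quad3 _ _ _ _ _ _ (hdist' 1 2 (by norm_num))
      (hdist' 1 3 (by norm_num)) (hdist' 2 3 (by norm_num))
      (hev' 1 one_ne_zero) (hev' 2 two_ne_zero) (hev' 3 three_ne_zero)
    have hcomm : polar (⇑q) w u = b := by rw [hbdef, polar_comm]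
    have hcomm' : polar (⇑q) (g w) (g u) = B'uw := by rw [hB'uw, polar_comm]
    rw [hcomm, hcomm'] at hA'
    have hbne : b ≠ 0 := hbw
    apply mul_left_cancel₀ hbne
    linear_combination b * hB - Bvw * hA + Bvu * hA'
  -- conclude
  refine ⟨polar (⇑q) (g u) (g w) / polar (⇑q) u w, ?_, ?_⟩
  · intro hc
    rw [div_eq_zero_iff] at hc
    have hc0 : polar (⇑q) (g u) (g w) = 0 := hc.resolve_right hbw
    have : q v₀ = 0 := by
      have h1 := main (g.symm v₀)
      rw [hc0, mul_zero] at h1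
      have h2 : q (g (g.symm v₀)) = 0 :=
        (mul_eq_zero.mp h1).resolve_right hbw
      simpa using h2
    exact hv₀ this
  · intro v
    have := main v
    field_simp
    linear_combination this
end
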